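/- Let d_1 ≤ d_2 ≤ ... ≤ d_r be positive real numbers (or positive integers), let s ≥ 1, and for i = 1,...,r set M_i = d_{r-i+1} + ... + d_{r-1} + s·d_r. Then C(s+r-1, r)·d_1·d_2···d_r ≤ (∏_{i=1}^r M_i)/r!. -/

import Mathlib

lemma prod_icc_ascFactorial (s r : ℕ) :
    ∏ i ∈ Finset.Icc 1 r, (s + i - 1) = s.ascFactorial r := by
  induction r with
  | zero => simp
  | succ n ih =>
    rw [Finset.prod_Icc_succ_top (by omega), ih, Nat.ascFactorial_succ]
    have : s + (n + 1) - 1 = s + n := by omega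
    rw [this, Nat.mul_comm]

theorem stmt5 (r s : ℕ) (hr : 1 ≤ r) (hs : 1 ≤ s) (d : ℕ → ℝ)
    (hpos : ∀ i, 1 ≤ i → i ≤ r → 0 < d i)
    (hmono : ∀ i j, 1 ≤ i → i ≤ j → j ≤ r → d i ≤ d j) :
    ((s + r - 1).choose r : ℝ) * ∏ i ∈ Finset.Icc 1 r, d i
      ≤ (∏ i ∈ Finset.Icc 1 r,
          ((∑ j ∈ Finset.Icc (r - i + 1) (r - 1), d j) + (s : ℝ) * d r)) / (r.factorial : ℝ) := by
  rw [le_div_iff₀ (by positivity : (0:ℝ) < r.factorial)]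
  -- Step 1: termwise bound
  have key : ∀ i ∈ Finset.Icc 1 r,
      ((s + i - 1 : ℕ) : ℝ) * d (r - i + 1)
        ≤ (∑ j ∈ Finset.Icc (r - i + 1) (r - 1), d j) + (s : ℝ) * d r := by
    intro i hi
    rw [Finset.mem_Icc] at hi
    obtain ⟨hi1, hi2⟩ := hi
    have hcast : ((s + i - 1 : ℕ) : ℝ) = (s : ℝ) + (i : ℝ) - 1 := by
      push_cast [Nat.cast_sub (by omega : 1 ≤ s + i)]; ring
    rw [hcast]
    have hd1 : 1 ≤ r - i + 1 := by omega
    have hd2 : r - i + 1 ≤ r := by omega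
    have hsum : ((i : ℝ) - 1) * d (r - i + 1) ≤ ∑ j ∈ Finset.Icc (r - i + 1) (r - 1), d j := by
      have hcard : (Finset.Icc (r - i + 1) (r - 1)).card = i - 1 := by
        rw [Nat.card_Icc]; omega
      have := Finset.card_nsmul_le_sum (Finset.Icc (r - i + 1) (r - 1)) d (d (r - i + 1))
        (fun j hj => by
          rw [Finset.mem_Icc] at hj
          exact hmono _ _ hd1 hj.1 (by omega))
      rw [hcard, nsmul_eq_mul] at this
      have hci : ((i - 1 : ℕ) : ℝ) = (i : ℝ) - 1 := by
        push_cast [Nat.cast_sub hi1]; ring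
      rwa [hci] at this
    have hs2 : (s : ℝ) * d (r - i + 1) ≤ (s : ℝ) * d r := by
      apply mul_le_mul_of_nonneg_left (hmono _ _ hd1 hd2 le_rfl) (by positivity)
    calc ((s : ℝ) + (i : ℝ) - 1) * d (r - i + 1)
        = ((i : ℝ) - 1) * d (r - i + 1) + (s : ℝ) * d (r - i + 1) := by ring
      _ ≤ (∑ j ∈ Finset.Icc (r - i + 1) (r - 1), d j) + (s : ℝ) * d r :=
        add_le_add hsum hs2
  have hprodle : ∏ i ∈ Finset.Icc 1 r, (((s + i - 1 : ℕ) : ℝ) * d (r - i + 1))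
      ≤ ∏ i ∈ Finset.Icc 1 r,
          ((∑ j ∈ Finset.Icc (r - i + 1) (r - 1), d j) + (s : ℝ) * d r) := by
    apply Finset.prod_le_prod
    · intro i hi
      rw [Finset.mem_Icc] at hi
      have := hpos (r - i + 1) (by omega) (by omega)
      positivity
    · exact key
  -- Step 2: rewrite the left product
  have hreindex : ∏ i ∈ Finset.Icc 1 r, d (r - i + 1) = ∏ i ∈ Finset.Icc 1 r, d i := by
    apply Finset.prod_nbij' (fun i => r - i + 1) (fun i => r - i + 1)
    all_goals intro i hi <;> simp only [Finset.mem_Icc] at * <;> first | omega | rfl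
  have hfac : ∏ i ∈ Finset.Icc 1 r, ((s + i - 1 : ℕ) : ℝ)
      = ((s + r - 1).choose r : ℝ) * (r.factorial : ℝ) := by
    rw [← Nat.cast_prod, prod_icc_ascFactorial, Nat.ascFactorial_eq_factorial_mul_choose']
    push_cast; ring
  calc ((s + r - 1).choose r : ℝ) * (∏ i ∈ Finset.Icc 1 r, d i) * (r.factorial : ℝ)
      = (∏ i ∈ Finset.Icc 1 r, ((s + i - 1 : ℕ) : ℝ)) * ∏ i ∈ Finset.Icc 1 r, d (r - i + 1) := by
        rw [hfac, hreindex]; ring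
    _ = ∏ i ∈ Finset.Icc 1 r, (((s + i - 1 : ℕ) : ℝ) * d (r - i + 1)) := by
        rw [Finset.prod_mul_distrib]
    _ ≤ _ := hprodle
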